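/- Let Q = (a,b)×(c,d) ⊂ ℝ², Q_ε = εQ for ε > 0, and Ω_ε = Q_ε × (0,1). There exists a constant c > 0 independent of ε such that for every f ∈ W^{1,2}(Ω_ε) with f(·,0) = f(·,1) = 0 on Q_ε, one has ∫₀¹ ∫_{Q_ε} |f(x_h, y) − (f)_{Q_ε}(y)|⁴ dx_h dy ≤ c ‖∇f‖⁴_{L²(Ω_ε)}, where (f)_{Q_ε}(y) = |Q_ε|⁻¹ ∫_{Q_ε} f(x_h, y) dx_h. -/

import Mathlib

open MeasureTheory Set

namespace Stmt4Aux

/-- continuous functions are integrable on bounded 1D intervals -/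
lemma int1d {a b : ℝ} {φ : ℝ → ℝ} (hφ : Continuous φ) : IntegrableOn φ (Ioo a b) :=
  ((hφ.continuousOn).integrableOn_compact isCompact_Icc).mono_set Ioo_subset_Icc_self

lemma int1dIoc {a b : ℝ} {φ : ℝ → ℝ} (hφ : Continuous φ) : IntegrableOn φ (Ioc a b) :=
  ((hφ.continuousOn).integrableOn_compact isCompact_Icc).mono_set Ioc_subset_Icc_self

lemma int2d {a b c d : ℝ} {φ : ℝ × ℝ → ℝ} (hφ : Continuous φ) :
    IntegrableOn φ (Ioo a b ×ˢ Ioo c d) :=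
  ((hφ.continuousOn).integrableOn_compact (isCompact_Icc.prod isCompact_Icc)).mono_set
    (prod_mono Ioo_subset_Icc_self Ioo_subset_Icc_self)

lemma int3d {a b c d : ℝ} {φ : (ℝ × ℝ) × ℝ → ℝ} (hφ : Continuous φ) :
    IntegrableOn φ ((Ioo a b ×ˢ Ioo c d) ×ˢ Ioo (0:ℝ) 1) :=
  ((hφ.continuousOn).integrableOn_compact
      ((isCompact_Icc.prod isCompact_Icc).prod isCompact_Icc)).mono_set
    (prod_mono (prod_mono Ioo_subset_Icc_self Ioo_subset_Icc_self) Ioo_subset_Icc_self)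

/-- the open rectangle is a.e. equal to the closed one -/
lemma aeRect {a b c d : ℝ} (hab : a ≤ b) (hcd : c ≤ d) :
    (Ioo a b ×ˢ Ioo c d : Set (ℝ × ℝ)) =ᵐ[volume] (Icc a b ×ˢ Icc c d : Set (ℝ × ℝ)) := by
  refine ae_eq_of_subset_of_measure_ge (prod_mono Ioo_subset_Icc_self Ioo_subset_Icc_self) ?_
    ((measurableSet_Ioo.prod measurableSet_Ioo).nullMeasurableSet) ?_
  · rw [Measure.volume_eq_prod, Measure.prod_prod, Measure.prod_prod, Real.volume_Ioo,
      Real.volume_Icc, Real.volume_Ioo, Real.volume_Icc]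
  · rw [Measure.volume_eq_prod, Measure.prod_prod, Real.volume_Icc, Real.volume_Icc]
    exact (ENNReal.mul_lt_top ENNReal.ofReal_lt_top ENNReal.ofReal_lt_top).ne


/-- replace open-rectangle set integral by closed-rectangle set integral -/
lemma intRectIccEq {a b c d : ℝ} (hab : a ≤ b) (hcd : c ≤ d) (φ : ℝ × ℝ → ℝ) :
    ∫ x in (Ioo a b ×ˢ Ioo c d : Set (ℝ × ℝ)), φ x = ∫ x in (Icc a b ×ˢ Icc c d : Set (ℝ × ℝ)), φ x :=
  setIntegral_congr_set (aeRect hab hcd)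

/-- continuity of a parametric integral over the rectangle -/
lemma contParam {a b c d : ℝ} (hab : a ≤ b) (hcd : c ≤ d) {φ : (ℝ × ℝ) × ℝ → ℝ}
    (hφ : Continuous φ) :
    Continuous (fun y => ∫ xh in (Ioo a b ×ˢ Ioo c d : Set (ℝ × ℝ)), φ (xh, y)) := by
  have : (fun y => ∫ xh in (Ioo a b ×ˢ Ioo c d : Set (ℝ × ℝ)), φ (xh, y)) =
      (fun y => ∫ xh in (Icc a b ×ˢ Icc c d : Set (ℝ × ℝ)), φ (xh, y)) := by
    funext y; exact intRectIccEq hab hcd _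
  rw [this]
  exact continuous_parametric_integral_of_continuous
    (by exact hφ.comp (continuous_snd.prodMk continuous_fst) : Continuous
      (Function.uncurry (fun (y : ℝ) (xh : ℝ × ℝ) => φ (xh, y))))
    (isCompact_Icc.prod isCompact_Icc)

/-- continuity of a vertical parametric integral with 2D parameter -/
lemma contParamV {φ : (ℝ × ℝ) × ℝ → ℝ} (hφ : Continuous φ) :
    Continuous (fun xh : ℝ × ℝ => ∫ t in Ioo (0:ℝ) 1, φ (xh, t)) := by
  have : (fun xh : ℝ × ℝ => ∫ t in Ioo (0:ℝ) 1, φ (xh, t)) =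
      (fun xh : ℝ × ℝ => ∫ t in Icc (0:ℝ) 1, φ (xh, t)) := by
    funext xh; exact setIntegral_congr_set Ioo_ae_eq_Icc
  rw [this]
  exact continuous_parametric_integral_of_continuous
    (by exact hφ.comp (continuous_fst.prodMk continuous_snd) : Continuous
      (Function.uncurry (fun (xh : ℝ × ℝ) (t : ℝ) => φ (xh, t))))
    isCompact_Icc

/-- continuity of a 1D parametric integral -/
lemma contParam1 {a b : ℝ} (hab : a ≤ b) {φ : ℝ × ℝ → ℝ} (hφ : Continuous φ) :
    Continuous (fun y => ∫ t in Ioo a b, φ (t, y)) := by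
  have : (fun y => ∫ t in Ioo a b, φ (t, y)) = (fun y => ∫ t in Icc a b, φ (t, y)) := by
    funext y; exact setIntegral_congr_set Ioo_ae_eq_Icc
  rw [this]
  exact continuous_parametric_integral_of_continuous
    (by exact hφ.comp (continuous_snd.prodMk continuous_fst) : Continuous
      (Function.uncurry (fun (y : ℝ) (t : ℝ) => φ (t, y))))
    isCompact_Icc


/-- Membership in L² for continuous functions on a bounded measurable set -/
lemma memL2_of_cont {E : Type*} [MeasurableSpace E] [TopologicalSpace E] [OpensMeasurableSpace E]
    [T2Space E] {μ : Measure E} [IsFiniteMeasureOnCompacts μ] {s : Set E}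
    (hms : MeasurableSet s) (hs : IsCompact (closure s)) {u : E → ℝ} (hu : Continuous u) :
    MemLp u 2 (μ.restrict s) := by
  haveI : IsFiniteMeasure (μ.restrict s) := by
    constructor
    rw [Measure.restrict_apply_univ]
    exact lt_of_le_of_lt (measure_mono subset_closure) hs.measure_lt_top
  obtain ⟨C, hC⟩ := hs.exists_bound_of_continuousOn hu.continuousOn
  refine MemLp.of_bound hu.aestronglyMeasurable C ?_
  filter_upwards [ae_restrict_mem hms] with x hx
  exact hC x (subset_closure hx)

/-- Cauchy-Schwarz for set integrals of continuous functions -/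
lemma csSet {E : Type*} [MeasurableSpace E] [TopologicalSpace E] [OpensMeasurableSpace E]
    [T2Space E] {μ : Measure E} [IsFiniteMeasureOnCompacts μ] {s : Set E}
    (hms : MeasurableSet s) (hs : IsCompact (closure s)) {u v : E → ℝ}
    (hu : Continuous u) (hv : Continuous v) :
    ∫ x in s, |u x * v x| ∂μ ≤
      Real.sqrt (∫ x in s, u x ^ 2 ∂μ) * Real.sqrt (∫ x in s, v x ^ 2 ∂μ) := by
  have h2 : (ENNReal.ofReal 2) = (2 : ENNReal) := by norm_num
  have hu2 : MemLp u (ENNReal.ofReal 2) (μ.restrict s) := h2 ▸ memL2_of_cont hms hs hu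
  have hv2 : MemLp v (ENNReal.ofReal 2) (μ.restrict s) := h2 ▸ memL2_of_cont hms hs hv
  have hpq : Real.HolderConjugate 2 2 := Real.HolderConjugate.two_two
  have h := integral_mul_norm_le_Lp_mul_Lq hpq hu2 hv2
  have key : ∀ x : ℝ, ‖x‖ ^ (2:ℝ) = x ^ 2 := fun x => by
    rw [show ((2:ℝ) = ((2:ℕ):ℝ)) from by norm_num, Real.rpow_natCast]; simp [sq_abs]
  have e1 : ∀ w : E → ℝ, (∫ a in s, ‖w a‖ ^ (2:ℝ) ∂μ) = ∫ a in s, w a ^ 2 ∂μ := fun w =>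
    integral_congr_ae (Filter.Eventually.of_forall fun a => key _)
  have e2 : ∀ w : E → ℝ, Real.sqrt (∫ a in s, w a ^ 2 ∂μ) =
      (∫ a in s, w a ^ 2 ∂μ) ^ (1/(2:ℝ)) := by
    intro w
    exact Real.sqrt_eq_rpow _
  calc ∫ x in s, |u x * v x| ∂μ = ∫ x in s, ‖u x‖ * ‖v x‖ ∂μ := by
        refine integral_congr_ae (Filter.Eventually.of_forall fun a => ?_)
        simp [abs_mul]
    _ ≤ (∫ a in s, ‖u a‖ ^ (2:ℝ) ∂μ) ^ (1/(2:ℝ)) * (∫ a in s, ‖v a‖ ^ (2:ℝ) ∂μ) ^ (1/(2:ℝ)) := h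
    _ = Real.sqrt (∫ x in s, u x ^ 2 ∂μ) * Real.sqrt (∫ x in s, v x ^ 2 ∂μ) := by
        rw [e1 u, e1 v, e2 u, e2 v]

/-- (∫|u|)² ≤ μ(s) ∫ u² -/
lemma sqIntAbs {E : Type*} [MeasurableSpace E] [TopologicalSpace E] [OpensMeasurableSpace E]
    [T2Space E] {μ : Measure E} [IsFiniteMeasureOnCompacts μ] {s : Set E}
    (hms : MeasurableSet s) (hs : IsCompact (closure s)) {u : E → ℝ} (hu : Continuous u) :
    (∫ x in s, |u x| ∂μ) ^ 2 ≤ (μ s).toReal * ∫ x in s, u x ^ 2 ∂μ := by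
  have h := csSet (μ := μ) hms hs (u := u) (v := fun _ => (1:ℝ)) hu continuous_const
  simp only [mul_one, one_pow] at h
  have hμ : (∫ _x in s, (1:ℝ) ∂μ) = (μ s).toReal := by simp [measureReal_def]
  rw [hμ] at h
  have h1 : (∫ x in s, |u x| ∂μ) ^ 2 ≤
      (Real.sqrt (∫ x in s, u x ^ 2 ∂μ) * Real.sqrt ((μ s).toReal)) ^ 2 := by
    refine pow_le_pow_left₀ (integral_nonneg fun x => abs_nonneg _) h 2
  calc (∫ x in s, |u x| ∂μ) ^ 2 ≤
      (Real.sqrt (∫ x in s, u x ^ 2 ∂μ) * Real.sqrt ((μ s).toReal)) ^ 2 := h1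
    _ = (∫ x in s, u x ^ 2 ∂μ) * (μ s).toReal := by
        rw [mul_pow, Real.sq_sqrt (integral_nonneg fun x => sq_nonneg _),
          Real.sq_sqrt ENNReal.toReal_nonneg]
    _ = (μ s).toReal * ∫ x in s, u x ^ 2 ∂μ := mul_comm _ _


/-- FTC bound: |u x - u s| is at most the integral of |u'| over (a,b) -/
lemma key0 {a b : ℝ} {u u' : ℝ → ℝ} (hu : ∀ t, HasDerivAt u (u' t) t)
    (hc : Continuous u') {x s : ℝ} (hx : x ∈ Icc a b) (hs : s ∈ Icc a b) :
    |u x - u s| ≤ ∫ t in Ioo a b, |u' t| := by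
  have hftc : ∫ t in s..x, u' t = u x - u s :=
    intervalIntegral.integral_eq_sub_of_hasDerivAt (fun t _ => hu t) (hc.intervalIntegrable s x)
  have hsub : Set.uIoc s x ⊆ Ioc a b := by
    rw [Set.uIoc]
    exact Ioc_subset_Ioc (le_min hs.1 hx.1) (max_le hs.2 hx.2)
  calc |u x - u s| = ‖∫ t in s..x, u' t‖ := by rw [hftc, Real.norm_eq_abs]
    _ ≤ ∫ t in Set.uIoc s x, ‖u' t‖ := intervalIntegral.norm_integral_le_integral_norm_uIoc
    _ ≤ ∫ t in Ioc a b, |u' t| := by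
        refine setIntegral_mono_set (int1dIoc hc.abs) ?_ hsub.eventuallyLE
        exact Filter.Eventually.of_forall fun t => abs_nonneg _
    _ = ∫ t in Ioo a b, |u' t| := integral_Ioc_eq_integral_Ioo

/-- pointwise square bound via averaging -/
lemma key1 {a b : ℝ} (hab : a < b) {u u' : ℝ → ℝ} (hu : ∀ t, HasDerivAt u (u' t) t)
    (hcu : Continuous u) (hc : Continuous u') {x : ℝ} (hx : x ∈ Icc a b) :
    u x ^ 2 ≤ (b - a)⁻¹ * (∫ s in Ioo a b, u s ^ 2) + ∫ t in Ioo a b, |2 * (u t * u' t)| := by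
  set K := ∫ t in Ioo a b, |2 * (u t * u' t)| with hK
  set I := ∫ s in Ioo a b, u s ^ 2 with hI
  have hv : ∀ t, HasDerivAt (fun t => u t ^ 2) (2 * (u t * u' t)) t := fun t => by
    simpa [pow_one, mul_assoc] using (hu t).fun_pow 2
  have hvc : Continuous fun t => 2 * (u t * u' t) := continuous_const.mul (hcu.mul hc)
  have step : ∀ s ∈ Ioo a b, u x ^ 2 - K ≤ u s ^ 2 := by
    intro s hs
    have h0 := key0 (a := a) (b := b) hv hvc hx (Ioo_subset_Icc_self hs)
    have h1 : u x ^ 2 - u s ^ 2 ≤ K := le_trans (le_abs_self _) h0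
    linarith
  have hba : (0 : ℝ) < b - a := by linarith
  have hmono : ∫ _s in Ioo a b, (u x ^ 2 - K) ≤ I := by
    refine setIntegral_mono_on ?_ (int1d (by continuity)) measurableSet_Ioo step
    exact (integrableOn_const_iff).mpr (Or.inr measure_Ioo_lt_top)
  have hconst : ∫ _s in Ioo a b, (u x ^ 2 - K) = (b - a) * (u x ^ 2 - K) := by
    rw [setIntegral_const, measureReal_def, Real.volume_Ioo, ENNReal.toReal_ofReal hba.le, smul_eq_mul]
  rw [hconst] at hmono
  have h3 : u x ^ 2 - K ≤ (b - a)⁻¹ * I := by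
    rw [inv_mul_eq_div, le_div_iff₀ hba]
    calc (u x ^ 2 - K) * (b - a) = (b - a) * (u x ^ 2 - K) := mul_comm _ _
      _ ≤ I := hmono
  linarith


/-- Fubini on the rectangle -/
lemma fub2 {a b c d : ℝ} {φ : ℝ × ℝ → ℝ} (hφ : Continuous φ) :
    ∫ x in Ioo a b ×ˢ Ioo c d, φ x = ∫ x₁ in Ioo a b, ∫ x₂ in Ioo c d, φ (x₁, x₂) := by
  rw [Measure.volume_eq_prod]
  exact setIntegral_prod φ (by rw [← Measure.volume_eq_prod]; exact int2d hφ)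

/-- Fubini on the rectangle, other order -/
lemma swap2 {a b c d : ℝ} {φ : ℝ × ℝ → ℝ} (hφ : Continuous φ) :
    ∫ x in Ioo a b ×ˢ Ioo c d, φ x = ∫ x₂ in Ioo c d, ∫ x₁ in Ioo a b, φ (x₁, x₂) := by
  rw [fub2 hφ]
  exact integral_integral_swap
    (by rw [Measure.prod_restrict, ← Measure.volume_eq_prod]; exact int2d hφ)

/-- Fubini on the box -/
lemma fub3 {a b c d : ℝ} {φ : (ℝ × ℝ) × ℝ → ℝ} (hφ : Continuous φ) :
    ∫ z in (Ioo a b ×ˢ Ioo c d) ×ˢ Ioo (0:ℝ) 1, φ z =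
      ∫ xh in Ioo a b ×ˢ Ioo c d, ∫ y in Ioo (0:ℝ) 1, φ (xh, y) := by
  rw [Measure.volume_eq_prod]
  exact setIntegral_prod φ (by rw [← Measure.volume_eq_prod]; exact int3d hφ)

/-- Fubini on the box, vertical first -/
lemma swap3 {a b c d : ℝ} {φ : (ℝ × ℝ) × ℝ → ℝ} (hφ : Continuous φ) :
    ∫ z in (Ioo a b ×ˢ Ioo c d) ×ˢ Ioo (0:ℝ) 1, φ z =
      ∫ y in Ioo (0:ℝ) 1, ∫ xh in Ioo a b ×ˢ Ioo c d, φ (xh, y) := by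
  rw [fub3 hφ]
  exact integral_integral_swap
    (by rw [Measure.prod_restrict, ← Measure.volume_eq_prod]; exact int3d hφ)


section Lady

variable {a b c d : ℝ} {w p1 p2 : ℝ × ℝ → ℝ}

/-- closure of the open rectangle is compact -/
lemma closRectCompact (hab : a < b) (hcd : c < d) :
    IsCompact (closure (Ioo a b ×ˢ Ioo c d : Set (ℝ × ℝ))) := by
  rw [closure_prod_eq, closure_Ioo hab.ne, closure_Ioo hcd.ne]
  exact isCompact_Icc.prod isCompact_Icc

/-- Ladyzhenskaya-type product bound on the rectangle -/
lemma lady (hab : a < b) (hcd : c < d)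
    (hw : Continuous w) (hp1 : Continuous p1) (hp2 : Continuous p2)
    (hd1 : ∀ x : ℝ × ℝ, HasDerivAt (fun t => w (t, x.2)) (p1 x) x.1)
    (hd2 : ∀ x : ℝ × ℝ, HasDerivAt (fun t => w (x.1, t)) (p2 x) x.2) :
    ∫ x in Ioo a b ×ˢ Ioo c d, w x ^ 4 ≤
      ((d - c)⁻¹ * (∫ x in Ioo a b ×ˢ Ioo c d, w x ^ 2) +
        2 * Real.sqrt (∫ x in Ioo a b ×ˢ Ioo c d, w x ^ 2) *
          Real.sqrt (∫ x in Ioo a b ×ˢ Ioo c d, p2 x ^ 2)) *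
      ((b - a)⁻¹ * (∫ x in Ioo a b ×ˢ Ioo c d, w x ^ 2) +
        2 * Real.sqrt (∫ x in Ioo a b ×ˢ Ioo c d, w x ^ 2) *
          Real.sqrt (∫ x in Ioo a b ×ˢ Ioo c d, p1 x ^ 2)) := by
  set Q : Set (ℝ × ℝ) := Ioo a b ×ˢ Ioo c d with hQ
  set N := ∫ x in Q, w x ^ 2 with hN
  set E1 := ∫ x in Q, p1 x ^ 2 with hE1
  set E2 := ∫ x in Q, p2 x ^ 2 with hE2
  set F : ℝ → ℝ := fun x₂ => (b - a)⁻¹ * (∫ t in Ioo a b, w (t, x₂) ^ 2) +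
    ∫ t in Ioo a b, |2 * (w (t, x₂) * p1 (t, x₂))| with hF
  set G : ℝ → ℝ := fun x₁ => (d - c)⁻¹ * (∫ t in Ioo c d, w (x₁, t) ^ 2) +
    ∫ t in Ioo c d, |2 * (w (x₁, t) * p2 (x₁, t))| with hG
  have hwc1 : ∀ x₂ : ℝ, Continuous (fun t => w (t, x₂)) := fun x₂ =>
    hw.comp (continuous_id.prodMk continuous_const)
  have hwc2 : ∀ x₁ : ℝ, Continuous (fun t => w (x₁, t)) := fun x₁ =>
    hw.comp (continuous_const.prodMk continuous_id)
  -- continuity of F and G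
  have hFc : Continuous F := by
    refine Continuous.add (continuous_const.mul ?_) ?_
    · exact contParam1 hab.le (hw.pow 2)
    · exact contParam1 hab.le ((continuous_const.mul (hw.mul hp1)).abs)
  have hGc : Continuous G := by
    refine Continuous.add (continuous_const.mul ?_) ?_
    · exact contParam1 hcd.le ((hw.pow 2).comp (continuous_swap))
    · exact contParam1 hcd.le (((continuous_const.mul (hw.mul hp2)).abs).comp continuous_swap)
  -- nonnegativity
  have hF0 : ∀ x₂, 0 ≤ F x₂ := by
    intro x₂
    refine add_nonneg (mul_nonneg (inv_nonneg.mpr (by linarith)) ?_) ?_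
    · exact setIntegral_nonneg measurableSet_Ioo fun t _ => sq_nonneg _
    · exact setIntegral_nonneg measurableSet_Ioo fun t _ => abs_nonneg _
  have hG0 : ∀ x₁, 0 ≤ G x₁ := by
    intro x₁
    refine add_nonneg (mul_nonneg (inv_nonneg.mpr (by linarith)) ?_) ?_
    · exact setIntegral_nonneg measurableSet_Ioo fun t _ => sq_nonneg _
    · exact setIntegral_nonneg measurableSet_Ioo fun t _ => abs_nonneg _
  -- pointwise bound
  have hpt : ∀ x ∈ Q, w x ^ 4 ≤ F x.2 * G x.1 := by
    rintro ⟨x₁, x₂⟩ hx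
    obtain ⟨hx1, hx2⟩ := hx
    have h1 : w (x₁, x₂) ^ 2 ≤ F x₂ := by
      refine key1 hab (u := fun t => w (t, x₂)) (u' := fun t => p1 (t, x₂))
        (fun t => hd1 (t, x₂)) (hwc1 x₂) (hp1.comp (continuous_id.prodMk continuous_const))
        (Ioo_subset_Icc_self hx1)
    have h2 : w (x₁, x₂) ^ 2 ≤ G x₁ := by
      refine key1 hcd (u := fun t => w (x₁, t)) (u' := fun t => p2 (x₁, t))
        (fun t => hd2 (x₁, t)) (hwc2 x₁) (hp2.comp (continuous_const.prodMk continuous_id))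
        (Ioo_subset_Icc_self hx2)
    calc w (x₁, x₂) ^ 4 = w (x₁, x₂) ^ 2 * w (x₁, x₂) ^ 2 := by ring
      _ ≤ F x₂ * G x₁ := mul_le_mul h1 h2 (sq_nonneg _) (hF0 x₂)
  -- integrate the pointwise bound
  have hQm : MeasurableSet Q := measurableSet_Ioo.prod measurableSet_Ioo
  have step1 : ∫ x in Q, w x ^ 4 ≤ ∫ x in Q, F x.2 * G x.1 := by
    refine setIntegral_mono_on (int2d (hw.pow 4)) (int2d ?_) hQm hpt
    exact (hFc.comp continuous_snd).mul (hGc.comp continuous_fst)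
  -- factor the product
  have step2 : ∫ x in Q, F x.2 * G x.1 = (∫ x₂ in Ioo c d, F x₂) * ∫ x₁ in Ioo a b, G x₁ := by
    calc ∫ x in Q, F x.2 * G x.1 = ∫ x in Q, G x.1 * F x.2 :=
          integral_congr_ae (Filter.Eventually.of_forall fun x => mul_comm _ _)
      _ = (∫ x₁ in Ioo a b, G x₁) * ∫ x₂ in Ioo c d, F x₂ := by
          rw [hQ, Measure.volume_eq_prod]
          exact setIntegral_prod_mul G F _ _
      _ = (∫ x₂ in Ioo c d, F x₂) * ∫ x₁ in Ioo a b, G x₁ := mul_comm _ _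
  -- evaluate ∫ F
  have cF1 : Continuous (fun x₂ : ℝ => ∫ t in Ioo a b, w (t, x₂) ^ 2) :=
    contParam1 hab.le (hw.pow 2)
  have cF2 : Continuous (fun x₂ : ℝ => ∫ t in Ioo a b, |2 * (w (t, x₂) * p1 (t, x₂))|) :=
    contParam1 hab.le ((continuous_const.mul (hw.mul hp1)).abs)
  have hFint : ∫ x₂ in Ioo c d, F x₂ =
      (b - a)⁻¹ * N + ∫ x in Q, |2 * (w x * p1 x)| := by
    have e0 : ∫ x₂ in Ioo c d, F x₂ =
        (∫ x₂ in Ioo c d, (b - a)⁻¹ * ∫ t in Ioo a b, w (t, x₂) ^ 2) +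
          ∫ x₂ in Ioo c d, ∫ t in Ioo a b, |2 * (w (t, x₂) * p1 (t, x₂))| :=
      integral_add ((int1d cF1).const_mul _) (int1d cF2)
    rw [e0, integral_const_mul]
    congr 1
    · congr 1
      exact (swap2 (hw.pow 2)).symm
    · exact (swap2 ((continuous_const.mul (hw.mul hp1)).abs)).symm
  -- evaluate ∫ G
  have cG1 : Continuous (fun x₁ : ℝ => ∫ t in Ioo c d, w (x₁, t) ^ 2) :=
    contParam1 hcd.le ((hw.comp continuous_swap).pow 2)
  have cG2 : Continuous (fun x₁ : ℝ => ∫ t in Ioo c d, |2 * (w (x₁, t) * p2 (x₁, t))|) :=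
    contParam1 hcd.le ((continuous_const.mul (((hw.comp continuous_swap)).mul
      (hp2.comp continuous_swap))).abs)
  have hGint : ∫ x₁ in Ioo a b, G x₁ =
      (d - c)⁻¹ * N + ∫ x in Q, |2 * (w x * p2 x)| := by
    have e0 : ∫ x₁ in Ioo a b, G x₁ =
        (∫ x₁ in Ioo a b, (d - c)⁻¹ * ∫ t in Ioo c d, w (x₁, t) ^ 2) +
          ∫ x₁ in Ioo a b, ∫ t in Ioo c d, |2 * (w (x₁, t) * p2 (x₁, t))| :=
      integral_add ((int1d cG1).const_mul _) (int1d cG2)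
    rw [e0, integral_const_mul]
    congr 1
    · congr 1
      exact (fub2 (hw.pow 2)).symm
    · exact (fub2 ((continuous_const.mul (hw.mul hp2)).abs)).symm
  -- Cauchy-Schwarz bounds
  have hclos := closRectCompact hab hcd
  have habs : ∀ q : ℝ × ℝ → ℝ, Continuous q →
      (∫ x in Q, |2 * (w x * q x)|) ≤
        2 * Real.sqrt N * Real.sqrt (∫ x in Q, q x ^ 2) := by
    intro q hq
    have e : ∫ x in Q, |2 * (w x * q x)| = 2 * ∫ x in Q, |w x * q x| := by
      calc ∫ x in Q, |2 * (w x * q x)| = ∫ x in Q, 2 * |w x * q x| :=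
            integral_congr_ae (Filter.Eventually.of_forall fun x => by simp [abs_mul, abs_two])
        _ = 2 * ∫ x in Q, |w x * q x| := integral_const_mul 2 _
    rw [e]
    have := csSet (μ := volume) hQm hclos hw hq
    calc 2 * ∫ x in Q, |w x * q x| ≤
        2 * (Real.sqrt N * Real.sqrt (∫ x in Q, q x ^ 2)) := by linarith
      _ = 2 * Real.sqrt N * Real.sqrt (∫ x in Q, q x ^ 2) := by ring
  have hF2 : ∫ x₂ in Ioo c d, F x₂ ≤ (b - a)⁻¹ * N + 2 * Real.sqrt N * Real.sqrt E1 := by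
    rw [hFint]; exact add_le_add_right (habs p1 hp1) _
  have hG2 : ∫ x₁ in Ioo a b, G x₁ ≤ (d - c)⁻¹ * N + 2 * Real.sqrt N * Real.sqrt E2 := by
    rw [hGint]; exact add_le_add_right (habs p2 hp2) _
  have hFpos : 0 ≤ ∫ x₂ in Ioo c d, F x₂ :=
    setIntegral_nonneg measurableSet_Ioo fun t _ => hF0 t
  have hGpos : 0 ≤ ∫ x₁ in Ioo a b, G x₁ :=
    setIntegral_nonneg measurableSet_Ioo fun t _ => hG0 t
  calc ∫ x in Q, w x ^ 4 ≤ ∫ x in Q, F x.2 * G x.1 := step1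
    _ = (∫ x₂ in Ioo c d, F x₂) * ∫ x₁ in Ioo a b, G x₁ := step2
    _ = (∫ x₁ in Ioo a b, G x₁) * ∫ x₂ in Ioo c d, F x₂ := mul_comm _ _
    _ ≤ ((d - c)⁻¹ * N + 2 * Real.sqrt N * Real.sqrt E2) *
        ((b - a)⁻¹ * N + 2 * Real.sqrt N * Real.sqrt E1) :=
        mul_le_mul hG2 hF2 hFpos (le_trans hGpos hG2)


lemma volQr (hab : a ≤ b) (hcd : c ≤ d) :
    (volume (Ioo a b ×ˢ Ioo c d : Set (ℝ × ℝ))).toReal = (b - a) * (d - c) := by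
  rw [Measure.volume_eq_prod, Measure.prod_prod, Real.volume_Ioo, Real.volume_Ioo,
    ← ENNReal.ofReal_mul (by linarith), ENNReal.toReal_ofReal
      (mul_nonneg (by linarith) (by linarith))]

lemma volQ_lt_top : volume (Ioo a b ×ˢ Ioo c d : Set (ℝ × ℝ)) < ⊤ := by
  rw [Measure.volume_eq_prod, Measure.prod_prod, Real.volume_Ioo, Real.volume_Ioo]
  exact ENNReal.mul_lt_top ENNReal.ofReal_lt_top ENNReal.ofReal_lt_top

/-- Poincaré inequality for mean-zero functions on the rectangle -/
lemma poincare (hab : a < b) (hcd : c < d)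
    (hw : Continuous w) (hp1 : Continuous p1) (hp2 : Continuous p2)
    (hd1 : ∀ x : ℝ × ℝ, HasDerivAt (fun t => w (t, x.2)) (p1 x) x.1)
    (hd2 : ∀ x : ℝ × ℝ, HasDerivAt (fun t => w (x.1, t)) (p2 x) x.2)
    (hmean : ∫ x in Ioo a b ×ˢ Ioo c d, w x = 0) :
    ∫ x in Ioo a b ×ˢ Ioo c d, w x ^ 2 ≤
      (b - a) ^ 2 * (∫ x in Ioo a b ×ˢ Ioo c d, p1 x ^ 2) +
        (d - c) ^ 2 * (∫ x in Ioo a b ×ˢ Ioo c d, p2 x ^ 2) := by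
  set Q : Set (ℝ × ℝ) := Ioo a b ×ˢ Ioo c d with hQ
  set N := ∫ x in Q, w x ^ 2 with hN
  set E1 := ∫ x in Q, p1 x ^ 2 with hE1
  set E2 := ∫ x in Q, p2 x ^ 2 with hE2
  set V := (volume Q).toReal with hV
  have hVval : V = (b - a) * (d - c) := volQr hab.le hcd.le
  have hVpos : 0 < V := by rw [hVval]; exact mul_pos (by linarith) (by linarith)
  have hQm : MeasurableSet Q := measurableSet_Ioo.prod measurableSet_Ioo
  have hQfin : volume Q < ⊤ := volQ_lt_top
  set P1 : ℝ → ℝ := fun x₂ => ∫ t in Ioo a b, p1 (t, x₂) ^ 2 with hP1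
  set P2 : ℝ → ℝ := fun z₁ => ∫ t in Ioo c d, p2 (z₁, t) ^ 2 with hP2
  have cP1 : Continuous P1 := contParam1 hab.le (hp1.pow 2)
  have cP2 : Continuous P2 := contParam1 hcd.le ((hp2.comp continuous_swap).pow 2)
  have hP1nn : ∀ x₂, 0 ≤ P1 x₂ := fun x₂ =>
    setIntegral_nonneg measurableSet_Ioo fun t _ => sq_nonneg _
  have hP2nn : ∀ z₁, 0 ≤ P2 z₁ := fun z₁ =>
    setIntegral_nonneg measurableSet_Ioo fun t _ => sq_nonneg _
  -- pointwise difference bound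
  have hpt : ∀ x ∈ Q, ∀ z ∈ Q, (w x - w z) ^ 2 ≤
      2 * (b - a) * P1 x.2 + 2 * (d - c) * P2 z.1 := by
    rintro ⟨x₁, x₂⟩ ⟨hx1, hx2⟩ ⟨z₁, z₂⟩ ⟨hz1, hz2⟩
    have hA : |w (x₁, x₂) - w (z₁, x₂)| ≤ ∫ t in Ioo a b, |p1 (t, x₂)| :=
      key0 (u := fun t => w (t, x₂)) (u' := fun t => p1 (t, x₂)) (fun t => hd1 (t, x₂))
        (hp1.comp (continuous_id.prodMk continuous_const))
        (Ioo_subset_Icc_self hx1) (Ioo_subset_Icc_self hz1)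
    have hB : |w (z₁, x₂) - w (z₁, z₂)| ≤ ∫ t in Ioo c d, |p2 (z₁, t)| :=
      key0 (u := fun t => w (z₁, t)) (u' := fun t => p2 (z₁, t)) (fun t => hd2 (z₁, t))
        (hp2.comp (continuous_const.prodMk continuous_id))
        (Ioo_subset_Icc_self hx2) (Ioo_subset_Icc_self hz2)
    have hA2 : (∫ t in Ioo a b, |p1 (t, x₂)|) ^ 2 ≤ (b - a) * P1 x₂ := by
      have := sqIntAbs (μ := volume) measurableSet_Ioo
        (by rw [closure_Ioo hab.ne]; exact isCompact_Icc)
        (hp1.comp (continuous_id.prodMk continuous_const) : Continuous fun t => p1 (t, x₂))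
      rwa [Real.volume_Ioo, ENNReal.toReal_ofReal (by linarith)] at this
    have hB2 : (∫ t in Ioo c d, |p2 (z₁, t)|) ^ 2 ≤ (d - c) * P2 z₁ := by
      have := sqIntAbs (μ := volume) measurableSet_Ioo
        (by rw [closure_Ioo hcd.ne]; exact isCompact_Icc)
        (hp2.comp (continuous_const.prodMk continuous_id) : Continuous fun t => p2 (z₁, t))
      rwa [Real.volume_Ioo, ENNReal.toReal_ofReal (by linarith)] at this
    have htri : |w (x₁, x₂) - w (z₁, z₂)| ≤
        (∫ t in Ioo a b, |p1 (t, x₂)|) + ∫ t in Ioo c d, |p2 (z₁, t)| := by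
      calc |w (x₁, x₂) - w (z₁, z₂)| ≤
          |w (x₁, x₂) - w (z₁, x₂)| + |w (z₁, x₂) - w (z₁, z₂)| := abs_sub_le _ _ _
        _ ≤ _ := add_le_add hA hB
    have hsq : (w (x₁, x₂) - w (z₁, z₂)) ^ 2 ≤
        ((∫ t in Ioo a b, |p1 (t, x₂)|) + ∫ t in Ioo c d, |p2 (z₁, t)|) ^ 2 := by
      rw [← sq_abs]
      exact pow_le_pow_left₀ (abs_nonneg _) htri 2
    have hAnn : 0 ≤ ∫ t in Ioo a b, |p1 (t, x₂)| :=
      setIntegral_nonneg measurableSet_Ioo fun t _ => abs_nonneg _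
    have hBnn : 0 ≤ ∫ t in Ioo c d, |p2 (z₁, t)| :=
      setIntegral_nonneg measurableSet_Ioo fun t _ => abs_nonneg _
    calc (w (x₁, x₂) - w (z₁, z₂)) ^ 2 ≤
        ((∫ t in Ioo a b, |p1 (t, x₂)|) + ∫ t in Ioo c d, |p2 (z₁, t)|) ^ 2 := hsq
      _ ≤ 2 * (∫ t in Ioo a b, |p1 (t, x₂)|) ^ 2 + 2 * (∫ t in Ioo c d, |p2 (z₁, t)|) ^ 2 := by
          nlinarith [sq_nonneg ((∫ t in Ioo a b, |p1 (t, x₂)|) - ∫ t in Ioo c d, |p2 (z₁, t)|)]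
      _ ≤ 2 * ((b - a) * P1 x₂) + 2 * ((d - c) * P2 z₁) := by
          have h2A := mul_le_mul_of_nonneg_left hA2 (by norm_num : (0:ℝ) ≤ 2)
          have h2B := mul_le_mul_of_nonneg_left hB2 (by norm_num : (0:ℝ) ≤ 2)
          linarith
      _ = 2 * (b - a) * P1 x₂ + 2 * (d - c) * P2 z₁ := by ring
  -- inner integral identity
  have inner_eq : ∀ x : ℝ × ℝ, ∫ z in Q, (w x - w z) ^ 2 = V * w x ^ 2 + N := by
    intro x
    have e1 : ∀ z : ℝ × ℝ, (w x - w z) ^ 2 = w x ^ 2 - 2 * w x * w z + w z ^ 2 :=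
      fun z => by ring
    have i1 : IntegrableOn (fun _z : ℝ × ℝ => w x ^ 2) Q volume :=
      (integrableOn_const_iff).mpr (Or.inr hQfin)
    have i2 : IntegrableOn (fun z : ℝ × ℝ => 2 * w x * w z) Q volume :=
      (int2d hw).const_mul _
    have i3 : IntegrableOn (fun z : ℝ × ℝ => w z ^ 2) Q volume := int2d (hw.pow 2)
    calc ∫ z in Q, (w x - w z) ^ 2
        = ∫ z in Q, (w x ^ 2 - 2 * w x * w z + w z ^ 2) :=
          integral_congr_ae (Filter.Eventually.of_forall fun z => e1 z)
      _ = (∫ z in Q, (w x ^ 2 - 2 * w x * w z)) + ∫ z in Q, w z ^ 2 :=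
          integral_add (i1.sub i2) i3
      _ = ((∫ _z in Q, w x ^ 2) - ∫ z in Q, 2 * w x * w z) + ∫ z in Q, w z ^ 2 := by
          rw [integral_sub i1 i2]
      _ = (V * w x ^ 2 - 2 * w x * ∫ z in Q, w z) + N := by
          rw [setIntegral_const, measureReal_def, smul_eq_mul, integral_const_mul]
      _ = V * w x ^ 2 + N := by rw [hmean]; ring
  -- ∫_Q P2 z.1 dz
  have hP2int : ∫ z in Q, P2 z.1 = (d - c) * E2 := by
    have h1 : ∫ z in Q, P2 z.1 = ∫ z₁ in Ioo a b, ∫ z₂ in Ioo c d, P2 z₁ :=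
      fub2 (cP2.comp continuous_fst)
    have h2 : ∀ z₁ : ℝ, (∫ _z₂ in Ioo c d, P2 z₁) = (d - c) * P2 z₁ := fun z₁ => by
      rw [setIntegral_const, measureReal_def, Real.volume_Ioo, ENNReal.toReal_ofReal (by linarith), smul_eq_mul]
    have h3 : ∫ z₁ in Ioo a b, P2 z₁ = E2 := (fub2 (hp2.pow 2)).symm
    calc ∫ z in Q, P2 z.1 = ∫ z₁ in Ioo a b, ∫ _z₂ in Ioo c d, P2 z₁ := h1
      _ = ∫ z₁ in Ioo a b, (d - c) * P2 z₁ :=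
          integral_congr_ae (Filter.Eventually.of_forall fun z₁ => h2 z₁)
      _ = (d - c) * ∫ z₁ in Ioo a b, P2 z₁ := integral_const_mul _ _
      _ = (d - c) * E2 := by rw [h3]
  -- ∫_Q P1 x.2 dx
  have hP1int : ∫ x in Q, P1 x.2 = (b - a) * E1 := by
    have h1 : ∫ x in Q, P1 x.2 = ∫ x₂ in Ioo c d, ∫ x₁ in Ioo a b, P1 x₂ :=
      swap2 (cP1.comp continuous_snd)
    have h2 : ∀ x₂ : ℝ, (∫ _x₁ in Ioo a b, P1 x₂) = (b - a) * P1 x₂ := fun x₂ => by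
      rw [setIntegral_const, measureReal_def, Real.volume_Ioo, ENNReal.toReal_ofReal (by linarith), smul_eq_mul]
    have h3 : ∫ x₂ in Ioo c d, P1 x₂ = E1 := (swap2 (hp1.pow 2)).symm
    calc ∫ x in Q, P1 x.2 = ∫ x₂ in Ioo c d, ∫ _x₁ in Ioo a b, P1 x₂ := h1
      _ = ∫ x₂ in Ioo c d, (b - a) * P1 x₂ :=
          integral_congr_ae (Filter.Eventually.of_forall fun x₂ => h2 x₂)
      _ = (b - a) * ∫ x₂ in Ioo c d, P1 x₂ := integral_const_mul _ _
      _ = (b - a) * E1 := by rw [h3]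
  -- pointwise in x
  have iP2 : IntegrableOn (fun z : ℝ × ℝ => 2 * (d - c) * P2 z.1) Q volume :=
    (int2d (cP2.comp continuous_fst)).const_mul _
  have hx_pt : ∀ x ∈ Q, V * w x ^ 2 + N ≤
      2 * (b - a) * V * P1 x.2 + 2 * (d - c) ^ 2 * E2 := by
    intro x hx
    have hmono : ∫ z in Q, (w x - w z) ^ 2 ≤
        ∫ z in Q, (2 * (b - a) * P1 x.2 + 2 * (d - c) * P2 z.1) :=
      setIntegral_mono_on (int2d ((continuous_const.sub hw).pow 2))
        (((integrableOn_const_iff).mpr (Or.inr hQfin)).add iP2) hQm (hpt x hx)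
    have hrhs : ∫ z in Q, (2 * (b - a) * P1 x.2 + 2 * (d - c) * P2 z.1) =
        V * (2 * (b - a) * P1 x.2) + 2 * (d - c) * ((d - c) * E2) := by
      rw [integral_add ((integrableOn_const_iff (C := 2 * (b - a) * P1 x.2)).mpr (Or.inr hQfin)) iP2, setIntegral_const, measureReal_def,
        smul_eq_mul, integral_const_mul, hP2int]
    calc V * w x ^ 2 + N = ∫ z in Q, (w x - w z) ^ 2 := (inner_eq x).symm
      _ ≤ ∫ z in Q, (2 * (b - a) * P1 x.2 + 2 * (d - c) * P2 z.1) := hmono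
      _ = V * (2 * (b - a) * P1 x.2) + 2 * (d - c) * ((d - c) * E2) := hrhs
      _ = 2 * (b - a) * V * P1 x.2 + 2 * (d - c) ^ 2 * E2 := by ring
  -- integrate over x
  have iL : IntegrableOn (fun x : ℝ × ℝ => V * w x ^ 2 + N) Q volume :=
    ((int2d (hw.pow 2)).const_mul _).add ((integrableOn_const_iff).mpr (Or.inr hQfin))
  have iR : IntegrableOn (fun x : ℝ × ℝ => 2 * (b - a) * V * P1 x.2 +
      2 * (d - c) ^ 2 * E2) Q volume :=
    ((int2d (cP1.comp continuous_snd)).const_mul _).add ((integrableOn_const_iff).mpr (Or.inr hQfin))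
  have hbig : ∫ x in Q, (V * w x ^ 2 + N) ≤
      ∫ x in Q, (2 * (b - a) * V * P1 x.2 + 2 * (d - c) ^ 2 * E2) :=
    setIntegral_mono_on iL iR hQm hx_pt
  have hint_l : ∫ x in Q, (V * w x ^ 2 + N) = V * N + V * N := by
    rw [integral_add (f := fun x => V * w x ^ 2) ((int2d (hw.pow 2)).const_mul _) ((integrableOn_const_iff (C := N)).mpr (Or.inr hQfin)),
      integral_const_mul, setIntegral_const, measureReal_def, smul_eq_mul]
  have iP1' : IntegrableOn (fun x : ℝ × ℝ => 2 * (b - a) * V * P1 x.2) Q volume :=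
    (int2d (cP1.comp continuous_snd)).const_mul _
  have hint_r : ∫ x in Q, (2 * (b - a) * V * P1 x.2 + 2 * (d - c) ^ 2 * E2) =
      2 * (b - a) * V * ((b - a) * E1) + V * (2 * (d - c) ^ 2 * E2) := by
    rw [integral_add iP1' ((integrableOn_const_iff).mpr (Or.inr hQfin)), integral_const_mul, hP1int,
      setIntegral_const, measureReal_def, smul_eq_mul]
  rw [hint_l, hint_r] at hbig
  have h2 : 2 * V * N ≤ 2 * V * ((b - a) ^ 2 * E1 + (d - c) ^ 2 * E2) := by nlinarith [hbig]
  exact le_of_mul_le_mul_left h2 (by positivity)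


/-- combined slice estimate: Ladyzhenskaya + Poincaré -/
lemma slice (hab : a < b) (hcd : c < d)
    (hw : Continuous w) (hp1 : Continuous p1) (hp2 : Continuous p2)
    (hd1 : ∀ x : ℝ × ℝ, HasDerivAt (fun t => w (t, x.2)) (p1 x) x.1)
    (hd2 : ∀ x : ℝ × ℝ, HasDerivAt (fun t => w (x.1, t)) (p2 x) x.2)
    (hmean : ∫ x in Ioo a b ×ˢ Ioo c d, w x = 0) :
    ∫ x in Ioo a b ×ˢ Ioo c d, w x ^ 4 ≤
      (((d - c)⁻¹ * max (b - a) (d - c) + 2) * ((b - a)⁻¹ * max (b - a) (d - c) + 2)) *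
        ((∫ x in Ioo a b ×ˢ Ioo c d, w x ^ 2) *
          ((∫ x in Ioo a b ×ˢ Ioo c d, p1 x ^ 2) + ∫ x in Ioo a b ×ˢ Ioo c d, p2 x ^ 2)) := by
  set Q : Set (ℝ × ℝ) := Ioo a b ×ˢ Ioo c d with hQ
  set N := ∫ x in Q, w x ^ 2 with hN
  set E1 := ∫ x in Q, p1 x ^ 2 with hE1
  set E2 := ∫ x in Q, p2 x ^ 2 with hE2
  set M := max (b - a) (d - c) with hM
  set S := E1 + E2 with hS
  have hQm : MeasurableSet Q := measurableSet_Ioo.prod measurableSet_Ioo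
  have hN0 : 0 ≤ N := setIntegral_nonneg hQm fun x _ => sq_nonneg _
  have hE10 : 0 ≤ E1 := setIntegral_nonneg hQm fun x _ => sq_nonneg _
  have hE20 : 0 ≤ E2 := setIntegral_nonneg hQm fun x _ => sq_nonneg _
  have hS0 : 0 ≤ S := by rw [hS]; linarith
  have hM0 : 0 < M := lt_of_lt_of_le (by linarith : (0:ℝ) < b - a) (le_max_left _ _)
  have hpoin : N ≤ M ^ 2 * S := by
    have h := poincare hab hcd hw hp1 hp2 hd1 hd2 hmean
    have h1 : (b - a) ^ 2 ≤ M ^ 2 :=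
      pow_le_pow_left₀ (by linarith) (le_max_left _ _) 2
    have h2 : (d - c) ^ 2 ≤ M ^ 2 :=
      pow_le_pow_left₀ (by linarith) (le_max_right _ _) 2
    have h3 : (b - a) ^ 2 * E1 ≤ M ^ 2 * E1 := mul_le_mul_of_nonneg_right h1 hE10
    have h4 : (d - c) ^ 2 * E2 ≤ M ^ 2 * E2 := mul_le_mul_of_nonneg_right h2 hE20
    rw [← hN, ← hE1, ← hE2] at h
    calc N ≤ (b - a) ^ 2 * E1 + (d - c) ^ 2 * E2 := h
      _ ≤ M ^ 2 * E1 + M ^ 2 * E2 := by linarith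
      _ = M ^ 2 * S := by rw [hS]; ring
  have hsqrtN : Real.sqrt N ≤ M * Real.sqrt S := by
    calc Real.sqrt N ≤ Real.sqrt (M ^ 2 * S) := Real.sqrt_le_sqrt hpoin
      _ = M * Real.sqrt S := by
          rw [Real.sqrt_mul (sq_nonneg M), Real.sqrt_sq hM0.le]
  have hE1S : Real.sqrt E1 ≤ Real.sqrt S := Real.sqrt_le_sqrt (by rw [hS]; linarith)
  have hE2S : Real.sqrt E2 ≤ Real.sqrt S := Real.sqrt_le_sqrt (by rw [hS]; linarith)
  set root := Real.sqrt N * Real.sqrt S with hroot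
  have hroot0 : 0 ≤ root := mul_nonneg (Real.sqrt_nonneg _) (Real.sqrt_nonneg _)
  have hrootsq : root * root = N * S := by
    rw [hroot, mul_mul_mul_comm, Real.mul_self_sqrt hN0, Real.mul_self_sqrt hS0]
  have bracket : ∀ e L : ℝ, 0 ≤ e → Real.sqrt e ≤ Real.sqrt S → 0 < L →
      L⁻¹ * N + 2 * Real.sqrt N * Real.sqrt e ≤ (L⁻¹ * M + 2) * root := by
    intro e L he heS hL
    have h1 : L⁻¹ * N ≤ L⁻¹ * M * root := by
      have h2 : Real.sqrt N * Real.sqrt N ≤ Real.sqrt N * (M * Real.sqrt S) :=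
        mul_le_mul_of_nonneg_left hsqrtN (Real.sqrt_nonneg _)
      calc L⁻¹ * N = L⁻¹ * (Real.sqrt N * Real.sqrt N) := by rw [Real.mul_self_sqrt hN0]
        _ ≤ L⁻¹ * (Real.sqrt N * (M * Real.sqrt S)) :=
            mul_le_mul_of_nonneg_left h2 (inv_nonneg.mpr hL.le)
        _ = L⁻¹ * M * root := by rw [hroot]; ring
    have h3 : 2 * Real.sqrt N * Real.sqrt e ≤ 2 * root := by
      have h4 : Real.sqrt N * Real.sqrt e ≤ Real.sqrt N * Real.sqrt S :=
        mul_le_mul_of_nonneg_left heS (Real.sqrt_nonneg _)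
      rw [hroot, mul_assoc]
      linarith
    have e5 : (L⁻¹ * M + 2) * root = L⁻¹ * M * root + 2 * root := by ring
    rw [e5]
    exact add_le_add h1 h3
  have hb_d : (d - c)⁻¹ * N + 2 * Real.sqrt N * Real.sqrt E2 ≤
      ((d - c)⁻¹ * M + 2) * root := bracket E2 (d - c) hE20 hE2S (by linarith)
  have hb_b : (b - a)⁻¹ * N + 2 * Real.sqrt N * Real.sqrt E1 ≤
      ((b - a)⁻¹ * M + 2) * root := bracket E1 (b - a) hE10 hE1S (by linarith)
  have hBb0 : 0 ≤ (b - a)⁻¹ * N + 2 * Real.sqrt N * Real.sqrt E1 :=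
    add_nonneg (mul_nonneg (inv_nonneg.mpr (by linarith)) hN0)
      (mul_nonneg (mul_nonneg (by norm_num) (Real.sqrt_nonneg _)) (Real.sqrt_nonneg _))
  have hcd0 : 0 ≤ ((d - c)⁻¹ * M + 2) * root :=
    mul_nonneg (add_nonneg (mul_nonneg (inv_nonneg.mpr (by linarith)) hM0.le) (by norm_num))
      hroot0
  calc ∫ x in Q, w x ^ 4 ≤
      ((d - c)⁻¹ * N + 2 * Real.sqrt N * Real.sqrt E2) *
        ((b - a)⁻¹ * N + 2 * Real.sqrt N * Real.sqrt E1) :=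
        lady hab hcd hw hp1 hp2 hd1 hd2
    _ ≤ (((d - c)⁻¹ * M + 2) * root) * (((b - a)⁻¹ * M + 2) * root) :=
        mul_le_mul hb_d hb_b hBb0 hcd0
    _ = (((d - c)⁻¹ * M + 2) * ((b - a)⁻¹ * M + 2)) * (root * root) := by ring
    _ = (((d - c)⁻¹ * M + 2) * ((b - a)⁻¹ * M + 2)) * (N * S) := by rw [hrootsq]

end Lady

end Stmt4Aux

open Stmt4Aux
theorem stmt4 (qa qb qc qd : ℝ) (hab : qa < qb) (hcd : qc < qd) :
    ∃ c : ℝ, 0 < c ∧ ∀ ε : ℝ, 0 < ε →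
      ∀ f : (ℝ × ℝ) × ℝ → ℝ, ContDiff ℝ 1 f →
        (∀ xh ∈ closure (Set.Ioo (ε * qa) (ε * qb) ×ˢ Set.Ioo (ε * qc) (ε * qd)),
          f (xh, 0) = 0 ∧ f (xh, 1) = 0) →
        (∫ y in Set.Ioo (0:ℝ) 1,
            ∫ xh in Set.Ioo (ε * qa) (ε * qb) ×ˢ Set.Ioo (ε * qc) (ε * qd),
              |f (xh, y)
                - ((volume (Set.Ioo (ε * qa) (ε * qb) ×ˢ Set.Ioo (ε * qc) (ε * qd))).toReal)⁻¹
                    * ∫ zh in Set.Ioo (ε * qa) (ε * qb) ×ˢ Set.Ioo (ε * qc) (ε * qd),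
                        f (zh, y)| ^ 4)
          ≤ c * (∫ z in (Set.Ioo (ε * qa) (ε * qb) ×ˢ Set.Ioo (ε * qc) (ε * qd)) ×ˢ
                    Set.Ioo (0:ℝ) 1, ‖fderiv ℝ f z‖ ^ 2) ^ 2 := by
  have hu : (0:ℝ) < qb - qa := by linarith
  have hv : (0:ℝ) < qd - qc := by linarith
  set mq := max (qb - qa) (qd - qc) with hmq
  have hmq0 : 0 < mq := lt_of_lt_of_le hu (le_max_left _ _)
  set Cq := ((qd - qc)⁻¹ * mq + 2) * ((qb - qa)⁻¹ * mq + 2) with hCq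
  have hCq0 : 0 < Cq := by
    have h1 : 0 ≤ (qd - qc)⁻¹ * mq := mul_nonneg (inv_nonneg.mpr hv.le) hmq0.le
    have h2 : 0 ≤ (qb - qa)⁻¹ * mq := mul_nonneg (inv_nonneg.mpr hu.le) hmq0.le
    have : (0:ℝ) < (qd - qc)⁻¹ * mq + 2 := by linarith
    have : (0:ℝ) < (qb - qa)⁻¹ * mq + 2 := by linarith
    positivity
  refine ⟨2 * Cq, by linarith, ?_⟩
  intro ε hε f hf hbc
  set A := ε * qa with hA
  set B := ε * qb with hB
  set C := ε * qc with hC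
  set D := ε * qd with hD
  have hAB : A < B := by rw [hA, hB]; exact mul_lt_mul_of_pos_left hab hε
  have hCD : C < D := by rw [hC, hD]; exact mul_lt_mul_of_pos_left hcd hε
  set Q : Set (ℝ × ℝ) := Ioo A B ×ˢ Ioo C D with hQ
  have hQm : MeasurableSet Q := measurableSet_Ioo.prod measurableSet_Ioo
  have hQfin : volume Q < ⊤ := volQ_lt_top
  set V := (volume Q).toReal with hV
  have hVval : V = (B - A) * (D - C) := volQr hAB.le hCD.le
  have hVpos : 0 < V := by rw [hVval]; exact mul_pos (by linarith) (by linarith)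
  set R := ∫ z in Q ×ˢ Ioo (0:ℝ) 1, ‖fderiv ℝ f z‖ ^ 2 with hR
  have hR0 : 0 ≤ R :=
    setIntegral_nonneg (hQm.prod measurableSet_Ioo) fun z _ => sq_nonneg _
  -- continuity facts
  have hfc : Continuous f := hf.continuous
  have hcf : Continuous (fderiv ℝ f) := hf.continuous_fderiv one_ne_zero
  set d1 : (ℝ × ℝ) × ℝ → ℝ := fun z => fderiv ℝ f z (((1:ℝ), (0:ℝ)), (0:ℝ)) with hd1def
  set d2 : (ℝ × ℝ) × ℝ → ℝ := fun z => fderiv ℝ f z (((0:ℝ), (1:ℝ)), (0:ℝ)) with hd2def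
  set d3 : (ℝ × ℝ) × ℝ → ℝ := fun z => fderiv ℝ f z (((0:ℝ), (0:ℝ)), (1:ℝ)) with hd3def
  have hd1c : Continuous d1 :=
    (ContinuousLinearMap.apply ℝ ℝ (((1:ℝ), (0:ℝ)), (0:ℝ))).continuous.comp hcf
  have hd2c : Continuous d2 :=
    (ContinuousLinearMap.apply ℝ ℝ (((0:ℝ), (1:ℝ)), (0:ℝ))).continuous.comp hcf
  have hd3c : Continuous d3 :=
    (ContinuousLinearMap.apply ℝ ℝ (((0:ℝ), (0:ℝ)), (1:ℝ))).continuous.comp hcf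
  have hnorm : ∀ (v : (ℝ × ℝ) × ℝ), ‖v‖ = 1 → ∀ z, |fderiv ℝ f z v| ≤ ‖fderiv ℝ f z‖ := by
    intro v hvn z
    have h := (fderiv ℝ f z).le_opNorm v
    rw [hvn, mul_one, Real.norm_eq_abs] at h
    exact h
  have hn1 : ‖((((1:ℝ), (0:ℝ)), (0:ℝ)) : (ℝ × ℝ) × ℝ)‖ = 1 := by
    simp [Prod.norm_def]
  have hn2 : ‖((((0:ℝ), (1:ℝ)), (0:ℝ)) : (ℝ × ℝ) × ℝ)‖ = 1 := by
    simp [Prod.norm_def]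
  have hn3 : ‖((((0:ℝ), (0:ℝ)), (1:ℝ)) : (ℝ × ℝ) × ℝ)‖ = 1 := by
    simp [Prod.norm_def]
  -- partial derivatives along lines
  have hD1 : ∀ (x₂ y t : ℝ), HasDerivAt (fun s => f ((s, x₂), y)) (d1 ((t, x₂), y)) t := by
    intro x₂ y t
    have hL : HasDerivAt (fun s : ℝ => ((s, x₂), y)) ((((1:ℝ), (0:ℝ)), (0:ℝ))) t :=
      ((hasDerivAt_id t).prodMk (hasDerivAt_const t x₂)).prodMk (hasDerivAt_const t y)
    exact (hf.differentiable one_ne_zero _).hasFDerivAt.comp_hasDerivAt t hL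
  have hD2 : ∀ (x₁ y t : ℝ), HasDerivAt (fun s => f ((x₁, s), y)) (d2 ((x₁, t), y)) t := by
    intro x₁ y t
    have hL : HasDerivAt (fun s : ℝ => ((x₁, s), y)) ((((0:ℝ), (1:ℝ)), (0:ℝ))) t :=
      ((hasDerivAt_const t x₁).prodMk (hasDerivAt_id t)).prodMk (hasDerivAt_const t y)
    exact (hf.differentiable one_ne_zero _).hasFDerivAt.comp_hasDerivAt t hL
  have hD3 : ∀ (xh : ℝ × ℝ) (t : ℝ), HasDerivAt (fun s => f (xh, s)) (d3 (xh, t)) t := by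
    intro xh t
    have hL : HasDerivAt (fun s : ℝ => (xh, s)) ((((0:ℝ), (0:ℝ)), (1:ℝ))) t :=
      (hasDerivAt_const t xh).prodMk (hasDerivAt_id t)
    exact (hf.differentiable one_ne_zero _).hasFDerivAt.comp_hasDerivAt t hL
  -- vertical energy and W
  set W : ℝ → ℝ := fun y => ∫ xh in Q, ‖fderiv ℝ f (xh, y)‖ ^ 2 with hW
  have hWc : Continuous W := contParam hAB.le hCD.le (hcf.norm.pow 2)
  have hWint : ∫ y in Ioo (0:ℝ) 1, W y = R := (swap3 (hcf.norm.pow 2)).symm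
  -- the mean
  have habs4 : ∀ t : ℝ, |t| ^ 4 = t ^ 4 := fun t => by
    rw [pow_abs, abs_of_nonneg (by positivity)]
  -- main per-slice estimate
  have hPhi : ∀ y ∈ Ioo (0:ℝ) 1,
      (∫ xh in Q, |f (xh, y) - V⁻¹ * ∫ zh in Q, f (zh, y)| ^ 4) ≤ 2 * Cq * R * W y := by
    intro y hy
    set mval := V⁻¹ * ∫ zh in Q, f (zh, y) with hmval
    set w : ℝ × ℝ → ℝ := fun xh => f (xh, y) - mval with hwdef
    set p1 : ℝ × ℝ → ℝ := fun xh => d1 (xh, y) with hp1def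
    set p2 : ℝ × ℝ → ℝ := fun xh => d2 (xh, y) with hp2def
    have hwc : Continuous w :=
      (hfc.comp (continuous_id.prodMk continuous_const)).sub continuous_const
    have hp1c : Continuous p1 := hd1c.comp (continuous_id.prodMk continuous_const)
    have hp2c : Continuous p2 := hd2c.comp (continuous_id.prodMk continuous_const)
    have hd1w : ∀ x : ℝ × ℝ, HasDerivAt (fun t => w (t, x.2)) (p1 x) x.1 :=
      fun x => (hD1 x.2 y x.1).sub_const mval
    have hd2w : ∀ x : ℝ × ℝ, HasDerivAt (fun t => w (x.1, t)) (p2 x) x.2 :=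
      fun x => (hD2 x.1 y x.2).sub_const mval
    have hfyc : Continuous (fun xh : ℝ × ℝ => f (xh, y)) :=
      hfc.comp (continuous_id.prodMk continuous_const)
    have hfyint : IntegrableOn (fun xh : ℝ × ℝ => f (xh, y)) Q volume := int2d hfyc
    have hVm : V * mval = ∫ zh in Q, f (zh, y) := by
      rw [hmval, ← mul_assoc, mul_inv_cancel₀ hVpos.ne', one_mul]
    have hmean : ∫ xh in Q, w xh = 0 := by
      rw [hwdef]
      rw [integral_sub hfyint ((integrableOn_const_iff).mpr (Or.inr hQfin)), setIntegral_const, measureReal_def,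
        smul_eq_mul, ← hV, hVm, sub_self]
    -- slice inequality
    set N := ∫ xh in Q, w xh ^ 2 with hN
    set E1 := ∫ xh in Q, p1 xh ^ 2 with hE1
    set E2 := ∫ xh in Q, p2 xh ^ 2 with hE2
    have hN0 : 0 ≤ N := setIntegral_nonneg hQm fun x _ => sq_nonneg _
    have hE10 : 0 ≤ E1 := setIntegral_nonneg hQm fun x _ => sq_nonneg _
    have hE20 : 0 ≤ E2 := setIntegral_nonneg hQm fun x _ => sq_nonneg _
    have hslice := slice hAB hCD hwc hp1c hp2c hd1w hd2w hmean
    rw [← hN, ← hE1, ← hE2] at hslice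
    -- scale the constant
    have hBA : B - A = ε * (qb - qa) := by rw [hA, hB]; ring
    have hDC : D - C = ε * (qd - qc) := by rw [hC, hD]; ring
    have hmax : max (B - A) (D - C) = ε * mq := by
      rw [hBA, hDC, hmq]
      rcases le_total (qb - qa) (qd - qc) with h | h
      · rw [max_eq_right (mul_le_mul_of_nonneg_left h hε.le), max_eq_right h]
      · rw [max_eq_left (mul_le_mul_of_nonneg_left h hε.le), max_eq_left h]
    have hconst : ((D - C)⁻¹ * max (B - A) (D - C) + 2) *
        ((B - A)⁻¹ * max (B - A) (D - C) + 2) = Cq := by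
      rw [hmax, hBA, hDC, hCq]
      rw [mul_inv, mul_inv]
      field_simp
    rw [hconst] at hslice
    -- bound N by R
    have hNR : N ≤ R := by
      have hyIcc : y ∈ Icc (0:ℝ) 1 := Ioo_subset_Icc_self hy
      have h01 : (0:ℝ) ∈ Icc (0:ℝ) 1 := ⟨le_refl 0, by norm_num⟩
      -- N ≤ ∫ f(·,y)²
      have hexp : N = (∫ xh in Q, f (xh, y) ^ 2) - V * mval ^ 2 := by
        rw [hN, hwdef]
        have e1 : ∀ xh : ℝ × ℝ, (f (xh, y) - mval) ^ 2 =
            f (xh, y) ^ 2 - 2 * mval * f (xh, y) + mval ^ 2 := fun xh => by ring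
        have i1 : IntegrableOn (fun xh : ℝ × ℝ => f (xh, y) ^ 2) Q volume :=
          int2d (hfyc.pow 2)
        have i2 : IntegrableOn (fun xh : ℝ × ℝ => 2 * mval * f (xh, y)) Q volume :=
          hfyint.const_mul _
        have i3 : IntegrableOn (fun _xh : ℝ × ℝ => mval ^ 2) Q volume :=
          (integrableOn_const_iff).mpr (Or.inr hQfin)
        calc ∫ xh in Q, (f (xh, y) - mval) ^ 2
            = ∫ xh in Q, (f (xh, y) ^ 2 - 2 * mval * f (xh, y) + mval ^ 2) :=
              integral_congr_ae (Filter.Eventually.of_forall fun xh => e1 xh)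
          _ = (∫ xh in Q, (f (xh, y) ^ 2 - 2 * mval * f (xh, y))) + ∫ _xh in Q, mval ^ 2 :=
              integral_add (i1.sub i2) i3
          _ = ((∫ xh in Q, f (xh, y) ^ 2) - ∫ xh in Q, 2 * mval * f (xh, y)) +
              ∫ _xh in Q, mval ^ 2 := by rw [integral_sub i1 i2]
          _ = ((∫ xh in Q, f (xh, y) ^ 2) - 2 * mval * (V * mval)) + V * mval ^ 2 := by
              rw [integral_const_mul, hVm, setIntegral_const, measureReal_def, smul_eq_mul, ← hV]
          _ = (∫ xh in Q, f (xh, y) ^ 2) - V * mval ^ 2 := by ring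
      have hN1 : N ≤ ∫ xh in Q, f (xh, y) ^ 2 := by
        rw [hexp]
        have : 0 ≤ V * mval ^ 2 := mul_nonneg hVpos.le (sq_nonneg _)
        linarith
      -- pointwise vertical bound
      have hpt : ∀ xh ∈ Q, f (xh, y) ^ 2 ≤ ∫ t in Ioo (0:ℝ) 1, d3 (xh, t) ^ 2 := by
        intro xh hxh
        have hb0 : f (xh, 0) = 0 := (hbc xh (subset_closure hxh)).1
        have habs : |f (xh, y) - f (xh, 0)| ≤ ∫ t in Ioo (0:ℝ) 1, |d3 (xh, t)| :=
          key0 (u := fun t => f (xh, t)) (u' := fun t => d3 (xh, t)) (fun t => hD3 xh t)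
            (hd3c.comp (continuous_const.prodMk continuous_id)) hyIcc h01
        rw [hb0, sub_zero] at habs
        have hsq : f (xh, y) ^ 2 ≤ (∫ t in Ioo (0:ℝ) 1, |d3 (xh, t)|) ^ 2 := by
          rw [← sq_abs]
          exact pow_le_pow_left₀ (abs_nonneg _) habs 2
        have hcs := sqIntAbs (μ := volume) measurableSet_Ioo
          (by rw [closure_Ioo (by norm_num : (0:ℝ) ≠ 1)]; exact isCompact_Icc)
          (u := fun t => d3 (xh, t)) (hd3c.comp (continuous_const.prodMk continuous_id))
        rw [Real.volume_Ioo, show ((1:ℝ) - 0) = 1 by norm_num, ENNReal.ofReal_one,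
          ENNReal.toReal_one, one_mul] at hcs
        exact le_trans hsq hcs
      have hKc : Continuous (fun xh : ℝ × ℝ => ∫ t in Ioo (0:ℝ) 1, d3 (xh, t) ^ 2) :=
        contParamV (hd3c.pow 2)
      have hN2 : (∫ xh in Q, f (xh, y) ^ 2) ≤
          ∫ xh in Q, (∫ t in Ioo (0:ℝ) 1, d3 (xh, t) ^ 2) :=
        setIntegral_mono_on (int2d (hfyc.pow 2)) (int2d hKc) hQm hpt
      have hN3 : (∫ xh in Q, (∫ t in Ioo (0:ℝ) 1, d3 (xh, t) ^ 2)) =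
          ∫ z in Q ×ˢ Ioo (0:ℝ) 1, d3 z ^ 2 := (fub3 (hd3c.pow 2)).symm
      have hN4 : (∫ z in Q ×ˢ Ioo (0:ℝ) 1, d3 z ^ 2) ≤ R := by
        rw [hR]
        refine setIntegral_mono_on (int3d (hd3c.pow 2)) (int3d (hcf.norm.pow 2))
          (hQm.prod measurableSet_Ioo) fun z _ => ?_
        have h := hnorm _ hn3 z
        calc d3 z ^ 2 = |d3 z| ^ 2 := (sq_abs _).symm
          _ ≤ ‖fderiv ℝ f z‖ ^ 2 := pow_le_pow_left₀ (abs_nonneg _) h 2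
      linarith [hN1, hN2, hN3 ▸ hN4]
    -- bound E1 + E2 by 2 W y
    have hEW : E1 + E2 ≤ 2 * W y := by
      have hWyc : Continuous (fun xh : ℝ × ℝ => ‖fderiv ℝ f (xh, y)‖ ^ 2) :=
        ((hcf.comp (continuous_id.prodMk continuous_const)).norm.pow 2)
      have hE1W : E1 ≤ W y := by
        rw [hE1, hW]
        refine setIntegral_mono_on (int2d (hp1c.pow 2)) (int2d hWyc) hQm fun xh _ => ?_
        have h := hnorm _ hn1 (xh, y)
        calc p1 xh ^ 2 = |d1 (xh, y)| ^ 2 := by rw [hp1def, sq_abs]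
          _ ≤ ‖fderiv ℝ f (xh, y)‖ ^ 2 := pow_le_pow_left₀ (abs_nonneg _) h 2
      have hE2W : E2 ≤ W y := by
        rw [hE2, hW]
        refine setIntegral_mono_on (int2d (hp2c.pow 2)) (int2d hWyc) hQm fun xh _ => ?_
        have h := hnorm _ hn2 (xh, y)
        calc p2 xh ^ 2 = |d2 (xh, y)| ^ 2 := by rw [hp2def, sq_abs]
          _ ≤ ‖fderiv ℝ f (xh, y)‖ ^ 2 := pow_le_pow_left₀ (abs_nonneg _) h 2
      linarith
    -- assemble
    have habseq : (∫ xh in Q, |f (xh, y) - V⁻¹ * ∫ zh in Q, f (zh, y)| ^ 4) =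
        ∫ xh in Q, w xh ^ 4 := by
      rw [hwdef, hmval]
      exact integral_congr_ae (Filter.Eventually.of_forall fun xh => habs4 _)
    rw [habseq]
    have hWy0 : 0 ≤ W y := setIntegral_nonneg hQm fun x _ => sq_nonneg _
    have hstep : N * (E1 + E2) ≤ R * (2 * W y) :=
      mul_le_mul hNR hEW (by linarith) hR0
    calc ∫ xh in Q, w xh ^ 4 ≤ Cq * (N * (E1 + E2)) := hslice
      _ ≤ Cq * (R * (2 * W y)) := mul_le_mul_of_nonneg_left hstep hCq0.le
      _ = 2 * Cq * R * W y := by ring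
  -- integrate in y
  have hLHS : (∫ y in Ioo (0:ℝ) 1,
      ∫ xh in Q, |f (xh, y) - V⁻¹ * ∫ zh in Q, f (zh, y)| ^ 4) ≤
      ∫ y in Ioo (0:ℝ) 1, 2 * Cq * R * W y := by
    refine integral_mono_of_nonneg ?_ ((int1d hWc).const_mul _) ?_
    · exact Filter.Eventually.of_forall fun y =>
        setIntegral_nonneg hQm fun xh _ => pow_nonneg (abs_nonneg _) 4
    · filter_upwards [ae_restrict_mem measurableSet_Ioo] with y hy
      exact hPhi y hy
  calc (∫ y in Ioo (0:ℝ) 1,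
      ∫ xh in Q, |f (xh, y) - V⁻¹ * ∫ zh in Q, f (zh, y)| ^ 4) ≤
      ∫ y in Ioo (0:ℝ) 1, 2 * Cq * R * W y := hLHS
    _ = 2 * Cq * R * ∫ y in Ioo (0:ℝ) 1, W y := integral_const_mul _ _
    _ = 2 * Cq * R * R := by rw [hWint]
    _ = 2 * Cq * R ^ 2 := by ring
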